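/- Let p ≥ 2 be an integer and r ≥ 1. Then 0 ≤ ∑_{d ∣ r} μ(r/d) p^d ≤ p^r, where μ is the Möbius function and the sum is over positive divisors d of r. -/
import Mathlib

open Finset in
lemma geo_aux (p : ℤ) (hp : 2 ≤ p) (n : ℕ) : ∑ i ∈ Finset.range n, p ^ i ≤ p ^ n - 1 := by
  have h := geom_sum_mul p n
  have hnn : 0 ≤ ∑ i ∈ Finset.range n, p ^ i :=
    Finset.sum_nonneg fun i _ => pow_nonneg (by omega) i
  nlinarith [h]

open Finset in
lemma sum_bound (p : ℤ) (hp : 2 ≤ p) (r M : ℕ) (F : Finset ℕ)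
    (hF : ∀ d ∈ F, d < M) (f : ℕ → ℤ) (hf : ∀ d, |f d| ≤ 1) :
    |∑ d ∈ F, f d * p ^ d| ≤ p ^ M - 1 := by
  calc |∑ d ∈ F, f d * p ^ d| ≤ ∑ d ∈ F, |f d * p ^ d| := Finset.abs_sum_le_sum_abs _ _
    _ ≤ ∑ d ∈ F, p ^ d := by
        refine Finset.sum_le_sum fun d _ => ?_
        rw [abs_mul, abs_pow, abs_of_nonneg (by omega : (0:ℤ) ≤ p)]
        calc |f d| * p ^ d ≤ 1 * p ^ d := by
              exact mul_le_mul_of_nonneg_right (hf d) (pow_nonneg (by omega) d)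
          _ = p ^ d := one_mul _
    _ ≤ ∑ d ∈ Finset.range M, p ^ d := by
        refine Finset.sum_le_sum_of_subset_of_nonneg ?_ fun i _ _ => pow_nonneg (by omega) i
        intro d hd; exact Finset.mem_range.mpr (hF d hd)
    _ ≤ p ^ M - 1 := geo_aux p hp M

open ArithmeticFunction in
theorem stmt_0 (p r : ℕ) (hp : 2 ≤ p) (hr : 1 ≤ r) :
    0 ≤ ∑ d ∈ r.divisors, (moebius (r / d)) * (p : ℤ) ^ d ∧
    ∑ d ∈ r.divisors, (moebius (r / d)) * (p : ℤ) ^ d ≤ (p : ℤ) ^ r := by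
  have hpz : (2:ℤ) ≤ (p:ℤ) := by exact_mod_cast hp
  have hmu : ∀ d, |((moebius d : ℤ))| ≤ 1 := fun d => by
    exact_mod_cast abs_moebius_le_one (n := d)
  rcases eq_or_lt_of_le hr with h1 | h2
  · -- r = 1
    subst_vars
    simp [Nat.divisors_one]
  · -- r ≥ 2
    have hr2 : 2 ≤ r := h2
    set q := r.minFac with hq
    have hqp : q.Prime := Nat.minFac_prime (by omega)
    set m := r / q with hm
    have hqd : q ∣ r := Nat.minFac_dvd r
    have hmd : m ∣ r := Nat.div_dvd_of_dvd hqd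
    have hmlt : m < r := Nat.div_lt_self (by omega) hqp.one_lt
    have hm1 : 1 ≤ m := Nat.one_le_div_iff hqp.pos |>.mpr (Nat.minFac_le (by omega))
    have hrm : r / m = q := by
      rw [hm]; exact Nat.div_div_self hqd (by omega)
    -- every proper divisor is ≤ m
    have hle : ∀ d ∈ r.divisors.erase r, d ≤ m := by
      intro d hd
      rw [Finset.mem_erase, Nat.mem_divisors] at hd
      obtain ⟨hne, hdvd, -⟩ := hd
      obtain ⟨k, hk⟩ := hdvd
      have hd0 : 0 < d := Nat.pos_of_dvd_of_pos ⟨k, hk⟩ (by omega)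
      have hk2 : 2 ≤ k := by
        rcases Nat.lt_or_ge k 2 with hk1 | hk1
        · interval_cases k <;> omega
        · exact hk1
      have hqk : q ≤ k := Nat.minFac_le_of_dvd hk2 ⟨d, by rw [hk, Nat.mul_comm]⟩
      have : d * q ≤ r := by calc d * q ≤ d * k := by exact Nat.mul_le_mul_left d hqk
                                  _ = r := hk.symm
      exact Nat.le_div_iff_mul_le hqp.pos |>.mpr this
    have hrmem : r ∈ r.divisors := Nat.mem_divisors_self r (by omega)
    have hmmem : m ∈ r.divisors.erase r :=
      Finset.mem_erase.mpr ⟨by omega, Nat.mem_divisors.mpr ⟨hmd, by omega⟩⟩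
    -- split off d = r
    rw [← Finset.add_sum_erase _ _ hrmem]
    have hmur : (moebius (r / r) : ℤ) = 1 := by
      rw [Nat.div_self (by omega)]; simp
    rw [hmur, one_mul]
    -- split off d = m from the erased sum
    rw [← Finset.add_sum_erase _ _ hmmem]
    have hmum : (moebius (r / m) : ℤ) = -1 := by
      rw [hrm]; simp [moebius_apply_prime hqp]
    rw [hmum]
    set F := (r.divisors.erase r).erase m with hF
    have hFlt : ∀ d ∈ F, d < m := by
      intro d hd
      rw [hF, Finset.mem_erase] at hd
      exact lt_of_le_of_ne (hle d hd.2) hd.1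
    have hbd : |∑ d ∈ F, (moebius (r / d) : ℤ) * (p:ℤ) ^ d| ≤ (p:ℤ) ^ m - 1 :=
      sum_bound (p:ℤ) hpz r m F hFlt _ (fun d => hmu _)
    have habs := abs_le.mp hbd
    have hmr : m + 1 ≤ r := by
      have h1 : m * q ≤ r := Nat.div_mul_le_self r q
      have h2 : 2 * m ≤ m * q := by nlinarith [hqp.two_le]
      omega
    have hpow : (p:ℤ) ^ (m+1) ≤ (p:ℤ) ^ r := pow_le_pow_right₀ (by omega) hmr
    have hpm : (0:ℤ) < (p:ℤ) ^ m := pow_pos (by omega) m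
    have hpows : (p:ℤ) ^ m * (p:ℤ) ≤ (p:ℤ) ^ r := by
      rw [← pow_succ]; exact hpow
    constructor
    · nlinarith [habs.1, hpows, hpm]
    · nlinarith [habs.2, hpm]
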